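/- Let ρ be a sub-normalized state, σ a positive definite matrix, M a positive semidefinite matrix with tr(Mσ) ≤ 1, α > 1 and ε ∈ (0,1). Then there exists an orthogonal projector Π (Π Hermitian with Π² = Π) such that tr(Πρ) ≤ ε² and tr(M·(1−Π)ρ(1−Π)) ≤ 2^{D̃_α(ρ‖σ)} · ε^{−2/(α−1)}. -/

import Mathlib

open scoped Classical ComplexOrder Kronecker
open Matrix

noncomputable section

variable {n : Type*} [Fintype n] [DecidableEq n]

/-- Real part of the trace. -/
def rtr (A : Matrix n n ℂ) : ℝ := (A.trace).re

/-- Löwner order: `loewnerLE A B` iff `B - A` is positive semidefinite. -/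
def loewnerLE (A B : Matrix n n ℂ) : Prop := (B - A).PosSemidef

/-- Positive semidefinite square root of a PSD matrix (junk value `0` otherwise). -/
def msqrt (A : Matrix n n ℂ) : Matrix n n ℂ :=
  if h : A.PosSemidef then (h.1.eigenvectorUnitary : Matrix n n ℂ) *
    diagonal (((↑) : ℝ → ℂ) ∘ (Real.sqrt ∘ h.1.eigenvalues)) *
    (star (h.1.eigenvectorUnitary : Matrix n n ℂ)) else 0

/-- Trace norm `‖A‖₁ = tr √(Aᴴ A)`. -/
def traceNorm (A : Matrix n n ℂ) : ℝ :=
  rtr (((Matrix.posSemidef_conjTranspose_mul_self A).1.eigenvectorUnitary : Matrix n n ℂ) *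
    diagonal (((↑) : ℝ → ℂ) ∘ (Real.sqrt ∘ (Matrix.posSemidef_conjTranspose_mul_self A).1.eigenvalues)) *
    (star ((Matrix.posSemidef_conjTranspose_mul_self A).1.eigenvectorUnitary : Matrix n n ℂ)))

/-- Generalized fidelity for sub-normalized states. -/
def genFid (ρ σ : Matrix n n ℂ) : ℝ :=
  (traceNorm (msqrt ρ * msqrt σ) + Real.sqrt ((1 - rtr ρ) * (1 - rtr σ))) ^ 2

/-- Purified distance. -/
def purDist (ρ σ : Matrix n n ℂ) : ℝ := Real.sqrt (1 - genFid ρ σ)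

/-- Trace distance. -/
def traceDist (ρ σ : Matrix n n ℂ) : ℝ := traceNorm (ρ - σ) / 2

/-- Max-divergence `D_max(ρ‖σ) = inf {λ : ρ ≤ 2^λ σ}` (Löwner order). -/
def Dmax (ρ σ : Matrix n n ℂ) : ℝ :=
  sInf {lam : ℝ | loewnerLE ρ (((2 : ℝ) ^ lam) • σ)}

/-- Smoothed max-divergence with purified-distance smoothing over sub-normalized states. -/
def DmaxSmoothP (ε : ℝ) (ρ σ : Matrix n n ℂ) : ℝ :=
  sInf {d : ℝ | ∃ ρ' : Matrix n n ℂ,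
    ρ'.PosSemidef ∧ rtr ρ' ≤ 1 ∧ purDist ρ ρ' ≤ ε ∧ d = Dmax ρ' σ}

/-- Hypothesis testing divergence
`D_h^ε(ρ‖σ) = -log sup {tr (Λ σ) : 0 ≤ Λ ≤ 1, tr (Λ ρ) ≥ 1 - ε}`. -/
def Dh (ε : ℝ) (ρ σ : Matrix n n ℂ) : ℝ :=
  - Real.logb 2 (sSup {x : ℝ | ∃ L : Matrix n n ℂ,
      L.PosSemidef ∧ loewnerLE L 1 ∧ 1 - ε ≤ rtr (L * ρ) ∧ x = rtr (L * σ)})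

/-- Real power of a Hermitian matrix, defined spectrally (junk value `0` if not Hermitian). -/
def hpow (A : Matrix n n ℂ) (t : ℝ) : Matrix n n ℂ :=
  if h : A.IsHermitian then
    (h.eigenvectorUnitary : Matrix n n ℂ) *
      Matrix.diagonal (fun i => ((h.eigenvalues i ^ t : ℝ) : ℂ)) *
      (star (h.eigenvectorUnitary : Matrix n n ℂ))
  else 0

/-- Sandwiched Rényi divergence of order `α`. -/
def sandwichedRenyi (α : ℝ) (ρ σ : Matrix n n ℂ) : ℝ :=
  (1 / (α - 1)) * Real.logb 2
    (rtr (hpow (hpow σ ((1 - α) / (2 * α)) * ρ * hpow σ ((1 - α) / (2 * α))) α) / rtr ρ)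

/-- Marginal (partial trace) on the first factor. -/
def margA {A B : Type*} [Fintype A] [Fintype B] (ρ : Matrix (A × B) (A × B) ℂ) :
    Matrix A A ℂ :=
  Matrix.of fun a a' => ∑ b : B, ρ (a, b) (a', b)

/-- Marginal (partial trace) on the second factor. -/
def margB {A B : Type*} [Fintype A] [Fintype B] (ρ : Matrix (A × B) (A × B) ℂ) :
    Matrix B B ℂ :=
  Matrix.of fun b b' => ∑ a : A, ρ (a, b) (a, b')

end

set_option linter.unusedSectionVars false
section Aux
open Complex
variable {n : Type*} [Fintype n] [DecidableEq n]

lemma rtr_eq_sum_re (Z : Matrix n n ℂ) : rtr Z = ∑ k, (Z k k).re := by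
  simp [rtr, Matrix.trace, Matrix.diag, Complex.re_sum]

lemma psd_entry_re_nonneg {Z : Matrix n n ℂ} (hZ : Z.PosSemidef) (k : n) :
    0 ≤ (Z k k).re := by
  have h := hZ.dotProduct_mulVec_nonneg (Pi.single k 1)
  have h2 : star (Pi.single k 1 : n → ℂ) ⬝ᵥ (Z *ᵥ Pi.single k 1) = Z k k := by
    simp [dotProduct, Matrix.mulVec, Pi.single_apply,
      Finset.sum_ite_eq', Finset.sum_ite_eq, apply_ite (star : ℂ → ℂ)]
  rw [h2] at h
  simpa using (Complex.le_def.mp h).1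

lemma psd_rtr_nonneg {Z : Matrix n n ℂ} (hZ : Z.PosSemidef) : 0 ≤ rtr Z := by
  rw [rtr_eq_sum_re]
  exact Finset.sum_nonneg fun k _ => psd_entry_re_nonneg hZ k

lemma psd_sqrt_exists {A : Matrix n n ℂ} (hA : A.PosSemidef) :
    ∃ S : Matrix n n ℂ, S.PosSemidef ∧ S * S = A := by
  set U : Matrix n n ℂ := (hA.1.eigenvectorUnitary : Matrix n n ℂ) with hU
  have hU1 : star U * U = 1 := Unitary.star_mul_self_of_mem hA.1.eigenvectorUnitary.2
  have hd : (Matrix.diagonal (fun i => ((Real.sqrt (hA.1.eigenvalues i) : ℝ) : ℂ))).PosSemidef := by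
    apply Matrix.posSemidef_diagonal_iff.mpr
    intro i
    exact_mod_cast Complex.zero_le_real.mpr (Real.sqrt_nonneg _)
  refine ⟨U * Matrix.diagonal (fun i => ((Real.sqrt (hA.1.eigenvalues i) : ℝ) : ℂ)) * star U,
    by simpa only [← Matrix.star_eq_conjTranspose] using hd.mul_mul_conjTranspose_same U, ?_⟩
  have e : U * Matrix.diagonal (fun i => ((Real.sqrt (hA.1.eigenvalues i) : ℝ) : ℂ)) * star U *
      (U * Matrix.diagonal (fun i => ((Real.sqrt (hA.1.eigenvalues i) : ℝ) : ℂ)) * star U)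
      = U * (Matrix.diagonal (fun i => ((Real.sqrt (hA.1.eigenvalues i) : ℝ) : ℂ)) * (star U * U) *
        Matrix.diagonal (fun i => ((Real.sqrt (hA.1.eigenvalues i) : ℝ) : ℂ))) * star U := by
    noncomm_ring
  rw [e, hU1, mul_one, Matrix.diagonal_mul_diagonal]
  have hf : (fun i => ((Real.sqrt (hA.1.eigenvalues i) : ℝ) : ℂ) * ((Real.sqrt (hA.1.eigenvalues i) : ℝ) : ℂ))
      = fun i => ((hA.1.eigenvalues i : ℝ) : ℂ) := by
    funext i
    rw [← Complex.ofReal_mul, Real.mul_self_sqrt (hA.eigenvalues_nonneg i)]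
  rw [hf]
  exact hA.1.spectral_theorem.symm

lemma rtr_mul_nonneg {A B : Matrix n n ℂ} (hA : A.PosSemidef) (hB : B.PosSemidef) :
    0 ≤ rtr (A * B) := by
  obtain ⟨S, hS, hSS⟩ := psd_sqrt_exists hA
  have h1 : A * B = S * (S * B) := by
    rw [← mul_assoc, hSS]
  have h2 : (A * B).trace = (S * B * S).trace := by
    rw [h1, Matrix.trace_mul_comm, mul_assoc]
  have h3 : (S * B * S).PosSemidef := by
    have := hB.mul_mul_conjTranspose_same S
    rwa [hS.isHermitian.eq] at this
  rw [rtr, h2, ← rtr]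
  exact psd_rtr_nonneg h3

end Aux
section Aux2
variable {n : Type*} [Fintype n] [DecidableEq n]

namespace ProjAux

variable {U : Matrix n n ℂ}

lemma UDU_mul (hU : star U * U = 1) (f g : n → ℂ) :
    (U * Matrix.diagonal f * star U) * (U * Matrix.diagonal g * star U)
      = U * Matrix.diagonal (fun i => f i * g i) * star U := by
  have hd : Matrix.diagonal f * Matrix.diagonal g = Matrix.diagonal (fun i => f i * g i) :=
    Matrix.diagonal_mul_diagonal f g
  calc U * Matrix.diagonal f * star U * (U * Matrix.diagonal g * star U)
      = U * Matrix.diagonal f * (star U * U) * Matrix.diagonal g * star U := by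
        noncomm_ring
    _ = U * (Matrix.diagonal f * Matrix.diagonal g) * star U := by
        rw [hU]; noncomm_ring
    _ = _ := by rw [hd]

lemma diag_isHermitian (f : n → ℝ) :
    (Matrix.diagonal (fun i => (f i : ℂ))).IsHermitian := by
  apply Matrix.isHermitian_diagonal_iff.mpr
  intro i
  exact Complex.conj_ofReal (f i)

lemma UDU_isHermitian (f : n → ℝ) :
    (U * Matrix.diagonal (fun i => (f i : ℂ)) * star U).IsHermitian := by
  simpa only [← Matrix.star_eq_conjTranspose] using
    Matrix.isHermitian_mul_mul_conjTranspose U (diag_isHermitian f)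

lemma UDU_posSemidef (f : n → ℝ) (hf : ∀ i, 0 ≤ f i) :
    (U * Matrix.diagonal (fun i => (f i : ℂ)) * star U).PosSemidef := by
  have hd : (Matrix.diagonal (fun i => (f i : ℂ))).PosSemidef := by
    apply Matrix.posSemidef_diagonal_iff.mpr
    intro i
    exact_mod_cast Complex.zero_le_real.mpr (hf i)
  simpa only [← Matrix.star_eq_conjTranspose] using hd.mul_mul_conjTranspose_same U

lemma UDU_sub (f g : n → ℂ) :
    U * Matrix.diagonal f * star U - U * Matrix.diagonal g * star U
      = U * Matrix.diagonal (fun i => f i - g i) * star U := by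
  have hd : Matrix.diagonal f - Matrix.diagonal g = Matrix.diagonal (fun i => f i - g i) := by
    rw [Matrix.diagonal_sub]
  rw [← hd]
  noncomm_ring

lemma rtr_UDU (hU : star U * U = 1) (f : n → ℝ) :
    rtr (U * Matrix.diagonal (fun i => (f i : ℂ)) * star U) = ∑ i, f i := by
  rw [rtr, Matrix.trace_mul_cycle, hU, one_mul, Matrix.trace_diagonal, ← Complex.ofReal_sum]
  simp

lemma one_eq_UDU (hU2 : U * star U = 1) :
    (1 : Matrix n n ℂ) = U * Matrix.diagonal (fun _ : n => ((1 : ℝ) : ℂ)) * star U := by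
  have : Matrix.diagonal (fun _ : n => ((1:ℝ):ℂ)) = (1 : Matrix n n ℂ) := by
    simp [Matrix.diagonal_one]
  rw [this, mul_one, hU2]

end ProjAux
end Aux2
section Aux3
variable {n : Type*} [Fintype n] [DecidableEq n]
namespace ProjAux
open Complex

lemma conj_diag_entry (G : Matrix n n ℂ) (f : n → ℝ) (k : n) :
    ((star G * Matrix.diagonal (fun i => (f i:ℂ)) * G) k k).re
      = ∑ i, f i * Complex.normSq (G i k) := by
  rw [Matrix.mul_apply, Complex.re_sum]
  apply Finset.sum_congr rfl
  intro j _
  rw [Matrix.mul_diagonal, Matrix.star_apply]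
  have : star (G j k) * (f j : ℂ) * G j k = ((f j * Complex.normSq (G j k) : ℝ) : ℂ) := by
    rw [mul_comm (star (G j k)) ((f j : ℂ)), mul_assoc]
    rw [show star (G j k) * G j k = ((Complex.normSq (G j k) : ℝ) : ℂ) from by
      rw [Complex.normSq_eq_conj_mul_self]; rfl]
    push_cast
    ring
  rw [this, Complex.ofReal_re]

lemma gram_entry_re (G : Matrix n n ℂ) (k : n) :
    ((star G * G) k k).re = ∑ i, Complex.normSq (G i k) := by
  rw [Matrix.mul_apply, Complex.re_sum]
  apply Finset.sum_congr rfl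
  intro j _
  rw [Matrix.star_apply]
  rw [show star (G j k) * G j k = ((Complex.normSq (G j k) : ℝ) : ℂ) from by
    rw [Complex.normSq_eq_conj_mul_self]; rfl]
  simp

lemma sandwich_rearrange (V Y D : Matrix n n ℂ) :
    star Y * (V * D * star V) * Y = star (star V * Y) * D * (star V * Y) := by
  rw [StarMul.star_mul, star_star]
  noncomm_ring

lemma quad_entry_re (V Y : Matrix n n ℂ) (f : n → ℝ) (k : n) :
    ((star Y * (V * Matrix.diagonal (fun i => (f i:ℂ)) * star V) * Y) k k).re
      = ∑ i, f i * Complex.normSq ((star V * Y) i k) := by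
  rw [sandwich_rearrange, conj_diag_entry]

end ProjAux
end Aux3
section Master
variable {n : Type*} [Fintype n] [DecidableEq n]
namespace ProjAux
open Complex

lemma rtr_sub (A B : Matrix n n ℂ) : rtr (A - B) = rtr A - rtr B := by
  simp [rtr, Matrix.trace_sub, Complex.sub_re]

lemma hpow_unfold {A : Matrix n n ℂ} (hA : A.IsHermitian) (t : ℝ) :
    hpow A t = (hA.eigenvectorUnitary : Matrix n n ℂ) *
      Matrix.diagonal (fun i => ((hA.eigenvalues i ^ t : ℝ) : ℂ)) *
      (star (hA.eigenvectorUnitary : Matrix n n ℂ)) := by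
  unfold hpow
  rw [dif_pos hA]

lemma spectral' {A : Matrix n n ℂ} (hA : A.IsHermitian) :
    A = (hA.eigenvectorUnitary : Matrix n n ℂ) *
      Matrix.diagonal (fun i => ((hA.eigenvalues i : ℝ) : ℂ)) *
      (star (hA.eigenvectorUnitary : Matrix n n ℂ)) :=
  hA.spectral_theorem

set_option maxHeartbeats 2000000 in
theorem master (ρ σ A : Matrix n n ℂ) (hρ : ρ.PosSemidef) (hσ : σ.PosDef)
    (hA : A.PosSemidef) (μ α : ℝ) (hμ : 0 ≤ μ) (hα : 1 < α)
    (hAμ : ((μ : ℂ) • (1 : Matrix n n ℂ) - A).PosSemidef) :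
    rtr (A * ρ) ≤
      (rtr (hpow (hpow σ ((1-α)/(2*α)) * ρ * hpow σ ((1-α)/(2*α))) α)) ^ (1/α)
        * μ ^ (1/α) * (rtr (A * σ)) ^ ((α-1)/α) := by
  have hα0 : (0:ℝ) < α := lt_trans one_pos hα
  have hαne : α ≠ 0 := ne_of_gt hα0
  have hα1 : (0:ℝ) < α - 1 := by linarith
  have hα1ne : α - 1 ≠ 0 := ne_of_gt hα1
  set β : ℝ := α / (α - 1) with hβ_def
  have hβ : 1 < β := by
    rw [hβ_def, lt_div_iff₀ hα1]; linarith
  have hβ0 : (0:ℝ) < β := lt_trans one_pos hβ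
  have hβne : β ≠ 0 := ne_of_gt hβ0
  have hconj : Real.HolderConjugate β α := by
    refine Real.holderConjugate_iff.mpr ⟨hβ, ?_⟩
    rw [hβ_def]
    field_simp
    ring
  set b : ℝ := (α-1)/(2*α) with hb_def
  have h2bβ : 2 * b * β = 1 := by rw [hb_def, hβ_def]; field_simp
  have hβinv : 1 - β⁻¹ = 1/α := by rw [hβ_def]; field_simp; ring
  -- abstract spectral data for σ
  have hσH : σ.IsHermitian := hσ.1
  obtain ⟨U, s, hs, hU1, hU2, hσdec, hsbdec⟩ :
      ∃ (U : Matrix n n ℂ) (s : n → ℝ), (∀ i, 0 < s i) ∧ star U * U = 1 ∧ U * star U = 1 ∧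
        σ = U * Matrix.diagonal (fun i => ((s i : ℝ) : ℂ)) * star U ∧
        (∀ t : ℝ, hpow σ t = U * Matrix.diagonal (fun i => ((s i ^ t : ℝ) : ℂ)) * star U) :=
    ⟨_, _, (fun i => hσ.eigenvalues_pos i),
      Unitary.star_mul_self_of_mem hσH.eigenvectorUnitary.2,
      Unitary.mul_star_self_of_mem hσH.eigenvectorUnitary.2,
      spectral' hσH, fun t => hpow_unfold hσH t⟩
  have hsb_herm : star (hpow σ b) = hpow σ b := by
    rw [hsbdec b, Matrix.star_eq_conjTranspose, (UDU_isHermitian (fun i => s i ^ b)).eq]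
  have hsc_herm : star (hpow σ ((1-α)/(2*α))) = hpow σ ((1-α)/(2*α)) := by
    rw [hsbdec ((1-α)/(2*α)), Matrix.star_eq_conjTranspose,
      (UDU_isHermitian (fun i => s i ^ ((1-α)/(2*α)))).eq]
  have hbc : b + (1-α)/(2*α) = 0 := by rw [hb_def]; ring
  have hsbsc : hpow σ b * hpow σ ((1-α)/(2*α)) = 1 := by
    rw [hsbdec b, hsbdec ((1-α)/(2*α)), UDU_mul hU1]
    have he : (fun i => ((s i ^ b : ℝ) : ℂ) * ((s i ^ ((1-α)/(2*α)) : ℝ) : ℂ))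
        = fun _ : n => ((1:ℝ):ℂ) := by
      funext i
      rw [← Complex.ofReal_mul, ← Real.rpow_add (hs i), hbc, Real.rpow_zero]
    rw [he, ← one_eq_UDU hU2]
  have hscsb : hpow σ ((1-α)/(2*α)) * hpow σ b = 1 := by
    rw [hsbdec b, hsbdec ((1-α)/(2*α)), UDU_mul hU1]
    have he : (fun i => ((s i ^ ((1-α)/(2*α)) : ℝ) : ℂ) * ((s i ^ b : ℝ) : ℂ))
        = fun _ : n => ((1:ℝ):ℂ) := by
      funext i
      rw [← Complex.ofReal_mul, ← Real.rpow_add (hs i), add_comm, hbc, Real.rpow_zero]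
    rw [he, ← one_eq_UDU hU2]
  -- X and its spectral data
  set X : Matrix n n ℂ := hpow σ ((1-α)/(2*α)) * ρ * hpow σ ((1-α)/(2*α)) with hX_def
  have hXpsd : X.PosSemidef := by
    have h2 := hρ.mul_mul_conjTranspose_same (hpow σ ((1-α)/(2*α)))
    rw [← Matrix.star_eq_conjTranspose, hsc_herm] at h2
    exact h2
  have hXH : X.IsHermitian := hXpsd.1
  obtain ⟨V, lam, hlam, hV1, hV2, hXdec, hXαdec⟩ :
      ∃ (V : Matrix n n ℂ) (lam : n → ℝ), (∀ i, 0 ≤ lam i) ∧ star V * V = 1 ∧ V * star V = 1 ∧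
        X = V * Matrix.diagonal (fun i => ((lam i : ℝ) : ℂ)) * star V ∧
        hpow X α = V * Matrix.diagonal (fun i => ((lam i ^ α : ℝ) : ℂ)) * star V :=
    ⟨_, _, (fun i => hXpsd.eigenvalues_nonneg i),
      Unitary.star_mul_self_of_mem hXH.eigenvectorUnitary.2,
      Unitary.mul_star_self_of_mem hXH.eigenvectorUnitary.2,
      spectral' hXH, hpow_unfold hXH α⟩
  have hρ_eq : ρ = hpow σ b * X * hpow σ b := by
    rw [hX_def]
    calc ρ = (hpow σ b * hpow σ ((1-α)/(2*α))) * ρ * (hpow σ ((1-α)/(2*α)) * hpow σ b) := by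
          rw [hsbsc, hscsb, one_mul, mul_one]
      _ = hpow σ b * (hpow σ ((1-α)/(2*α)) * ρ * hpow σ ((1-α)/(2*α))) * hpow σ b := by
          noncomm_ring
  -- B, T, W
  obtain ⟨B0, hB0, hB0B0⟩ := psd_sqrt_exists hA
  have hBpsd : B0.PosSemidef := hB0
  set B : Matrix n n ℂ := B0 with hB_def
  have hB_herm : star B = B := by rw [Matrix.star_eq_conjTranspose, hBpsd.1.eq]
  have hBB : B * B = A := hB0B0
  set T : Matrix n n ℂ := star (hpow σ b * B) * (hpow σ b * B) with hT_def
  have hTpsd : T.PosSemidef := by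
    rw [hT_def, Matrix.star_eq_conjTranspose]
    exact Matrix.posSemidef_conjTranspose_mul_self _
  have hTH : T.IsHermitian := hTpsd.1
  obtain ⟨W, ν, hν, hW1, hW2, hTdec⟩ :
      ∃ (W : Matrix n n ℂ) (ν : n → ℝ), (∀ k, 0 ≤ ν k) ∧ star W * W = 1 ∧ W * star W = 1 ∧
        T = W * Matrix.diagonal (fun k => ((ν k : ℝ) : ℂ)) * star W :=
    ⟨_, _, (fun k => hTpsd.eigenvalues_nonneg k),
      Unitary.star_mul_self_of_mem hTH.eigenvectorUnitary.2,
      Unitary.mul_star_self_of_mem hTH.eigenvectorUnitary.2, spectral' hTH⟩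
  -- Y matrices
  set Y : Matrix n n ℂ := hpow σ b * B * W with hY_def
  set Y₂ : Matrix n n ℂ := B * W with hY₂_def
  have hYY₂ : Y = hpow σ b * Y₂ := by rw [hY_def, hY₂_def, mul_assoc]
  have hstarY₂ : star Y₂ = star W * B := by
    rw [hY₂_def, StarMul.star_mul, hB_herm]
  have hstarY : star Y = star W * B * hpow σ b := by
    rw [hY_def, StarMul.star_mul, StarMul.star_mul, hB_herm, hsb_herm]
    noncomm_ring
  have hYtY : star Y * Y = Matrix.diagonal (fun k => ((ν k : ℝ) : ℂ)) := by
    have e1 : star Y * Y = star W * T * W := by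
      rw [hstarY, hY_def, hT_def, StarMul.star_mul, hB_herm, hsb_herm]
      noncomm_ring
    rw [e1, hTdec]
    calc star W * (W * Matrix.diagonal (fun k => ((ν k : ℝ) : ℂ)) * star W) * W
        = (star W * W) * Matrix.diagonal (fun k => ((ν k : ℝ) : ℂ)) * (star W * W) := by
          noncomm_ring
      _ = _ := by rw [hW1, one_mul, mul_one]
  -- real coefficient arrays
  set cc : n → n → ℝ := fun k i => Complex.normSq ((star V * Y) i k) with hcc_def
  set dd : n → n → ℝ := fun k i => Complex.normSq ((star U * Y₂) i k) with hdd_def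
  have hcc0 : ∀ k i, 0 ≤ cc k i := fun k i => Complex.normSq_nonneg _
  have hdd0 : ∀ k i, 0 ≤ dd k i := fun k i => Complex.normSq_nonneg _
  -- ν k = ∑ cc k i
  have f2 : ∀ k, ν k = ∑ i, cc k i := by
    intro k
    have e1 : star (star V * Y) * (star V * Y) = star Y * Y := by
      rw [StarMul.star_mul, star_star]
      calc star Y * V * (star V * Y) = star Y * (V * star V) * Y := by noncomm_ring
        _ = star Y * Y := by rw [hV2, mul_one]
    have e2 := gram_entry_re (star V * Y) k
    rw [e1, hYtY, Matrix.diagonal_apply_eq] at e2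
    rw [Complex.ofReal_re] at e2
    exact e2
  -- rtr (A * ρ) = ∑∑ lam * cc
  have hYsY : Y * star Y = hpow σ b * A * hpow σ b := by
    rw [hY_def, hstarY]
    calc hpow σ b * B * W * (star W * B * hpow σ b)
        = hpow σ b * (B * (W * star W) * B) * hpow σ b := by noncomm_ring
      _ = _ := by rw [hW2, mul_one, hBB]
  have f3 : rtr (A * ρ) = ∑ k, ∑ i, lam i * cc k i := by
    have a1 : A * ρ = (A * hpow σ b) * X * hpow σ b := by
      rw [hρ_eq]; noncomm_ring
    have tr1 : (A * ρ).trace = (star Y * X * Y).trace := by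
      rw [a1, Matrix.trace_mul_cycle (A * hpow σ b) X (hpow σ b)]
      have a2 : hpow σ b * (A * hpow σ b) * X = (hpow σ b * A * hpow σ b) * X := by
        noncomm_ring
      rw [a2, ← hYsY]
      exact (Matrix.trace_mul_cycle (star Y) X Y).symm
    rw [rtr, tr1, ← rtr, rtr_eq_sum_re]
    apply Finset.sum_congr rfl
    intro k _
    have e2 := quad_entry_re V Y lam k
    rw [← hXdec] at e2
    exact e2
  -- ∑ dd ≤ μ
  have hY₂tY₂ : star Y₂ * Y₂ = star W * A * W := by
    rw [hstarY₂, hY₂_def]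
    calc star W * B * (B * W) = star W * (B * B) * W := by noncomm_ring
      _ = _ := by rw [hBB]
  have f6 : ∀ k, (∑ i, dd k i) ≤ μ := by
    intro k
    have e1 : star (star U * Y₂) * (star U * Y₂) = star Y₂ * Y₂ := by
      rw [StarMul.star_mul, star_star]
      calc star Y₂ * U * (star U * Y₂) = star Y₂ * (U * star U) * Y₂ := by noncomm_ring
        _ = star Y₂ * Y₂ := by rw [hU2, mul_one]
    have e2 := gram_entry_re (star U * Y₂) k
    rw [e1, hY₂tY₂] at e2
    have e3 : 0 ≤ ((star W * ((μ:ℂ) • (1:Matrix n n ℂ) - A) * W) k k).re := by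
      have hpsd := hAμ.conjTranspose_mul_mul_same W
      rw [← Matrix.star_eq_conjTranspose] at hpsd
      exact psd_entry_re_nonneg hpsd k
    have e4 : star W * ((μ:ℂ) • (1:Matrix n n ℂ) - A) * W
        = (μ:ℂ) • (1:Matrix n n ℂ) - star W * A * W := by
      have ee : star W * ((μ:ℂ) • (1:Matrix n n ℂ)) * W = (μ:ℂ) • (1:Matrix n n ℂ) := by
        rw [Matrix.mul_smul, Matrix.smul_mul, mul_one, hW1]
      calc star W * ((μ:ℂ) • (1:Matrix n n ℂ) - A) * W
          = star W * ((μ:ℂ) • (1:Matrix n n ℂ)) * W - star W * A * W := by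
            rw [Matrix.mul_sub, Matrix.sub_mul]
        _ = _ := by rw [ee]
    rw [e4] at e3
    have e5 : (((μ:ℂ) • (1:Matrix n n ℂ) - star W * A * W) k k).re
        = μ - ((star W * A * W) k k).re := by
      simp [Matrix.sub_apply, Matrix.smul_apply, Matrix.one_apply_eq]
    rw [e5] at e3
    rw [← e2]
    linarith
  -- ν k = ∑ s^(2b) dd
  have hsbsb : hpow σ b * hpow σ b
      = U * Matrix.diagonal (fun i => ((s i ^ (2*b) : ℝ):ℂ)) * star U := by
    rw [hsbdec b, UDU_mul hU1]
    have he : (fun i => ((s i ^ b:ℝ):ℂ) * ((s i ^ b:ℝ):ℂ))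
        = fun i => ((s i ^ (2*b):ℝ):ℂ) := by
      funext i
      rw [← Complex.ofReal_mul, ← Real.rpow_add (hs i), show b + b = 2*b from by ring]
    rw [he]
  have f5 : ∀ k, ν k = ∑ i, s i ^ (2*b) * dd k i := by
    intro k
    have e1 : star Y * Y
        = star Y₂ * (U * Matrix.diagonal (fun i => ((s i ^ (2*b):ℝ):ℂ)) * star U) * Y₂ := by
      rw [← hsbsb, hYY₂, StarMul.star_mul, hsb_herm]
      noncomm_ring
    have e2 := quad_entry_re U Y₂ (fun i => s i ^ (2*b)) k
    rw [← e1, hYtY, Matrix.diagonal_apply_eq, Complex.ofReal_re] at e2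
    exact e2
  -- ∑∑ s dd = rtr (A σ)
  have hY₂sY₂ : Y₂ * star Y₂ = A := by
    rw [hY₂_def, hstarY₂]
    calc B * W * (star W * B) = B * (W * star W) * B := by noncomm_ring
      _ = _ := by rw [hW2, mul_one, hBB]
  have f7 : ∑ k, ∑ i, s i * dd k i = rtr (A * σ) := by
    have tr1 : (star Y₂ * σ * Y₂).trace = (A * σ).trace := by
      rw [Matrix.trace_mul_cycle (star Y₂) σ Y₂, hY₂sY₂]
    calc ∑ k, ∑ i, s i * dd k i
        = ∑ k, ((star Y₂ * σ * Y₂) k k).re := by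
          apply Finset.sum_congr rfl
          intro k _
          have e2 := quad_entry_re U Y₂ s k
          rw [← hσdec] at e2
          exact e2.symm
      _ = rtr (star Y₂ * σ * Y₂) := (rtr_eq_sum_re _).symm
      _ = rtr (A * σ) := by rw [rtr, tr1]; rfl
  -- zα, eh
  set zα : n → ℝ := fun k => ∑ i, lam i ^ α * cc k i with hzα_def
  have hzα0 : ∀ k, 0 ≤ zα k := fun k =>
    Finset.sum_nonneg fun i _ => mul_nonneg (Real.rpow_nonneg (hlam i) α) (hcc0 k i)
  set eh : n → ℝ := fun k => if 0 < ν k then zα k / ν k else 0 with heh_def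
  have heh0 : ∀ k, 0 ≤ eh k := by
    intro k
    rw [heh_def]
    dsimp only
    split_ifs with h
    · exact div_nonneg (hzα0 k) (le_of_lt h)
    · exact le_refl 0
  -- the normalized-projector bound : ∑ eh ≤ rtr (hpow X α)
  set g : n → ℝ := fun k => if 0 < ν k then 1 / Real.sqrt (ν k) else 0 with hg_def
  set Yh : Matrix n n ℂ := Y * Matrix.diagonal (fun k => ((g k : ℝ):ℂ)) with hYh_def
  have hstarD : star (Matrix.diagonal (fun k => ((g k:ℝ):ℂ)))
      = Matrix.diagonal (fun k => ((g k:ℝ):ℂ)) := by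
    rw [Matrix.star_eq_conjTranspose, (diag_isHermitian g).eq]
  set e1v : n → ℝ := fun k => if 0 < ν k then (1:ℝ) else 0 with he1v_def
  have hYhtYh : star Yh * Yh = Matrix.diagonal (fun k => ((e1v k : ℝ):ℂ)) := by
    rw [hYh_def, StarMul.star_mul, hstarD]
    calc Matrix.diagonal (fun k => ((g k:ℝ):ℂ)) * star Y * (Y * Matrix.diagonal (fun k => ((g k:ℝ):ℂ)))
        = Matrix.diagonal (fun k => ((g k:ℝ):ℂ)) * (star Y * Y) * Matrix.diagonal (fun k => ((g k:ℝ):ℂ)) := by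
          noncomm_ring
      _ = _ := by
          rw [hYtY, Matrix.diagonal_mul_diagonal, Matrix.diagonal_mul_diagonal]
          have hfun : (fun i => ((g i : ℝ):ℂ) * ((ν i : ℝ):ℂ) * ((g i : ℝ):ℂ))
              = fun k => ((e1v k : ℝ):ℂ) := by
            funext k
            rw [← Complex.ofReal_mul, ← Complex.ofReal_mul]
            congr 1
            rw [hg_def, he1v_def]
            dsimp only
            split_ifs with h
            · have hsq : Real.sqrt (ν k) ≠ 0 := ne_of_gt (Real.sqrt_pos.mpr h)
              field_simp
              rw [Real.sq_sqrt (le_of_lt h)]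
            · ring
          rw [hfun]
  set Ph : Matrix n n ℂ := Yh * star Yh with hPh_def
  have hYh_e : Yh * Matrix.diagonal (fun k => ((e1v k : ℝ):ℂ)) = Yh := by
    rw [hYh_def, mul_assoc, Matrix.diagonal_mul_diagonal]
    have hfun : (fun i => ((g i : ℝ):ℂ) * ((e1v i : ℝ):ℂ)) = fun k => ((g k : ℝ):ℂ) := by
      funext k
      rw [← Complex.ofReal_mul]
      congr 1
      rw [hg_def, he1v_def]
      dsimp only
      split_ifs <;> ring
    rw [hfun]
  have hPhPh : Ph * Ph = Ph := by
    rw [hPh_def]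
    calc Yh * star Yh * (Yh * star Yh) = Yh * (star Yh * Yh) * star Yh := by noncomm_ring
      _ = (Yh * Matrix.diagonal (fun k => ((e1v k : ℝ):ℂ))) * star Yh := by
          rw [hYhtYh, mul_assoc]
      _ = Yh * star Yh := by rw [hYh_e]
  have hQpsd : ((1:Matrix n n ℂ) - Ph).PosSemidef := by
    have hPh_herm : star Ph = Ph := by rw [hPh_def, StarMul.star_mul, star_star]
    have hQherm : star ((1:Matrix n n ℂ) - Ph) = (1:Matrix n n ℂ) - Ph := by
      rw [star_sub, star_one, hPh_herm]
    have hQQ : ((1:Matrix n n ℂ) - Ph) * ((1:Matrix n n ℂ) - Ph) = 1 - Ph := by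
      calc ((1:Matrix n n ℂ) - Ph) * ((1:Matrix n n ℂ) - Ph)
          = 1 - Ph - Ph + Ph * Ph := by noncomm_ring
        _ = 1 - Ph := by rw [hPhPh]; abel
    have hrw : (1:Matrix n n ℂ) - Ph = ((1:Matrix n n ℂ) - Ph)ᴴ * ((1:Matrix n n ℂ) - Ph) := by
      rw [← Matrix.star_eq_conjTranspose, hQherm, hQQ]
    rw [hrw]
    exact Matrix.posSemidef_conjTranspose_mul_self _
  have hXαpsd : (hpow X α).PosSemidef := by
    rw [hXαdec]
    exact UDU_posSemidef _ (fun i => Real.rpow_nonneg (hlam i) α)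
  have f4 : ∑ k, eh k ≤ rtr (hpow X α) := by
    have e1 : ∀ k, ((star Yh * hpow X α * Yh) k k).re = eh k := by
      intro k
      have ee : star Yh * hpow X α * Yh
          = Matrix.diagonal (fun k => ((g k:ℝ):ℂ)) * (star Y * hpow X α * Y)
              * Matrix.diagonal (fun k => ((g k:ℝ):ℂ)) := by
        rw [hYh_def, StarMul.star_mul, hstarD]
        noncomm_ring
      have entry : (star Yh * hpow X α * Yh) k k
          = (g k : ℂ) * ((star Y * hpow X α * Y) k k) * (g k : ℂ) := by
        rw [ee, Matrix.mul_diagonal, Matrix.diagonal_mul]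
      have inner_re : ((star Y * hpow X α * Y) k k).re = zα k := by
        have e2 := quad_entry_re V Y (fun i => lam i ^ α) k
        rw [← hXαdec] at e2
        exact e2
      have : ((g k : ℂ) * ((star Y * hpow X α * Y) k k) * (g k : ℂ)).re
          = g k * g k * ((star Y * hpow X α * Y) k k).re := by
        rw [mul_comm ((g k : ℂ) * _) ((g k:ℂ)), ← mul_assoc, ← Complex.ofReal_mul,
          Complex.re_ofReal_mul]
      rw [entry, this, inner_re]
      rw [hg_def, heh_def]
      dsimp only
      split_ifs with h
      · have hsq : Real.sqrt (ν k) ≠ 0 := ne_of_gt (Real.sqrt_pos.mpr h)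
        rw [div_mul_div_comm, Real.mul_self_sqrt (le_of_lt h)]
        rw [one_mul, div_mul_eq_mul_div, one_mul]
      · ring
    have e2 : ∑ k, eh k = rtr (star Yh * hpow X α * Yh) := by
      rw [rtr_eq_sum_re]
      exact (Finset.sum_congr rfl (fun k _ => e1 k)).symm
    have e3 : rtr (star Yh * hpow X α * Yh) = rtr (hpow X α * Ph) := by
      rw [rtr, Matrix.trace_mul_cycle (star Yh) (hpow X α) Yh]
      rw [show Yh * star Yh * hpow X α = Ph * hpow X α from by rw [hPh_def]]
      rw [Matrix.trace_mul_comm]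
      rfl
    have e4 : 0 ≤ rtr (hpow X α * ((1:Matrix n n ℂ) - Ph)) := rtr_mul_nonneg hXαpsd hQpsd
    have e5 : hpow X α * ((1:Matrix n n ℂ) - Ph) = hpow X α - hpow X α * Ph := by
      rw [Matrix.mul_sub, mul_one]
    rw [e5, rtr_sub] at e4
    rw [e2, e3]
    linarith
  -- per-k inequality (i)
  have step1 : ∀ k, (∑ i, lam i * cc k i) ≤ ν k * eh k ^ (1/α) := by
    intro k
    by_cases hk : 0 < ν k
    · have hw := Real.inner_le_weight_mul_Lp_of_nonneg Finset.univ (le_of_lt hα)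
        (cc k) lam (hcc0 k) hlam
      have hz1 : ∑ i, cc k i * lam i ^ α = zα k := by
        rw [hzα_def]
        exact Finset.sum_congr rfl fun i _ => mul_comm _ _
      have hz2 : ∑ i, cc k i * lam i = ∑ i, lam i * cc k i :=
        Finset.sum_congr rfl fun i _ => mul_comm _ _
      rw [hz1, hz2, ← f2 k] at hw
      have heq : (ν k) ^ (1 - α⁻¹) * (zα k) ^ α⁻¹ = ν k * eh k ^ (1/α) := by
        have h1 : eh k = zα k / ν k := by rw [heh_def]; exact if_pos hk
        have h2 : (zα k / ν k) ^ (1/α) = zα k ^ (1/α) / ν k ^ (1/α) :=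
          Real.div_rpow (hzα0 k) (hν k) _
        rw [h1, show (1:ℝ) - α⁻¹ = 1 - 1/α from by rw [one_div],
          show (α⁻¹ : ℝ) = 1/α from (one_div α).symm, h2,
          show (ν k)^((1:ℝ) - 1/α) = ν k / ν k ^ ((1:ℝ)/α) from by
            rw [Real.rpow_sub hk, Real.rpow_one]]
        rw [div_mul_eq_mul_div, mul_div_assoc]
      rw [heq] at hw
      exact hw
    · have hν0 : ν k = 0 := le_antisymm (not_lt.mp hk) (hν k)
      have hsum : ∑ i, cc k i = 0 := by rw [← f2 k, hν0]
      have hcz : ∀ i ∈ Finset.univ, cc k i = 0 :=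
        (Finset.sum_eq_zero_iff_of_nonneg (fun i _ => hcc0 k i)).mp hsum
      have hzz : ∑ i, lam i * cc k i = 0 :=
        Finset.sum_eq_zero fun i hi => by rw [hcz i hi, mul_zero]
      rw [hzz, hν0, zero_mul]
  -- Hölder over k
  have step2 : ∑ k, ν k * eh k ^ (1/α)
      ≤ (∑ k, ν k ^ β)^(1/β) * (∑ k, eh k)^(1/α) := by
    have h := Real.inner_le_Lp_mul_Lq_of_nonneg Finset.univ hconj
      (f := ν) (g := fun k => eh k ^ (1/α)) (fun k _ => hν k)
      (fun k _ => Real.rpow_nonneg (heh0 k) _)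
    have he : ∀ k, (eh k ^ (1/α)) ^ α = eh k := by
      intro k
      rw [← Real.rpow_mul (heh0 k), one_div_mul_cancel hαne, Real.rpow_one]
    have hsum : ∑ k, ((eh k ^ (1/α)) ^ α) = ∑ k, eh k :=
      Finset.sum_congr rfl fun k _ => he k
    rw [hsum] at h
    exact h
  -- per-k bound on ν^β
  have hSk0 : ∀ k, 0 ≤ ∑ i, s i * dd k i := fun k =>
    Finset.sum_nonneg fun i _ => mul_nonneg (hs i).le (hdd0 k i)
  have step3 : ∀ k, ν k ^ β ≤ μ ^ (β - 1) * ∑ i, s i * dd k i := by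
    intro k
    have hw := Real.inner_le_weight_mul_Lp_of_nonneg Finset.univ (le_of_lt hβ)
      (dd k) (fun i => s i ^ (2*b)) (hdd0 k)
      (fun i => Real.rpow_nonneg (hs i).le _)
    have e1 : ∑ i, dd k i * s i ^ (2*b) = ν k := by
      rw [f5 k]
      exact Finset.sum_congr rfl fun i _ => mul_comm _ _
    have e2 : ∑ i, dd k i * (s i ^ (2*b)) ^ β = ∑ i, s i * dd k i := by
      apply Finset.sum_congr rfl
      intro i _
      rw [← Real.rpow_mul (hs i).le, h2bβ, Real.rpow_one, mul_comm]
    rw [e1, e2] at hw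
    have hdd_sum0 : 0 ≤ ∑ i, dd k i := Finset.sum_nonneg fun i _ => hdd0 k i
    have hexp0 : 0 ≤ 1 - β⁻¹ := by rw [hβinv]; positivity
    have h4 : (∑ i, dd k i) ^ (1 - β⁻¹) ≤ μ ^ (1 - β⁻¹) :=
      Real.rpow_le_rpow hdd_sum0 (f6 k) hexp0
    have h5 : ν k ≤ μ ^ (1-β⁻¹) * (∑ i, s i * dd k i) ^ β⁻¹ :=
      le_trans hw (mul_le_mul_of_nonneg_right h4 (Real.rpow_nonneg (hSk0 k) _))
    have h6 : ν k ^ β ≤ (μ ^ (1-β⁻¹) * (∑ i, s i * dd k i) ^ β⁻¹) ^ β :=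
      Real.rpow_le_rpow (hν k) h5 (le_of_lt hβ0)
    have h7 : (μ ^ (1-β⁻¹) * (∑ i, s i * dd k i) ^ β⁻¹) ^ β
        = μ ^ (β - 1) * ∑ i, s i * dd k i := by
      rw [Real.mul_rpow (Real.rpow_nonneg hμ _) (Real.rpow_nonneg (hSk0 k) _)]
      rw [← Real.rpow_mul hμ, ← Real.rpow_mul (hSk0 k)]
      rw [inv_mul_cancel₀ hβne, Real.rpow_one]
      congr 1
      field_simp
    rw [h7] at h6
    exact h6
  have step4 : ∑ k, ν k ^ β ≤ μ ^ (β-1) * rtr (A*σ) := by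
    calc ∑ k, ν k ^ β ≤ ∑ k, μ^(β-1) * ∑ i, s i * dd k i :=
          Finset.sum_le_sum (fun k _ => step3 k)
      _ = μ^(β-1) * ∑ k, ∑ i, s i * dd k i := by rw [Finset.mul_sum]
      _ = μ^(β-1) * rtr (A*σ) := by rw [f7]
  -- assemble
  have hrtrAσ0 : 0 ≤ rtr (A * σ) := rtr_mul_nonneg hA hσ.posSemidef
  have final1 : rtr (A * ρ) ≤ (∑ k, ν k ^ β)^(1/β) * (∑ k, eh k)^(1/α) := by
    rw [f3]
    calc ∑ k, ∑ i, lam i * cc k i ≤ ∑ k, ν k * eh k ^ (1/α) :=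
          Finset.sum_le_sum (fun k _ => step1 k)
      _ ≤ _ := step2
  have hνβ0 : 0 ≤ ∑ k, ν k ^ β := Finset.sum_nonneg fun k _ => Real.rpow_nonneg (hν k) β
  have heh_sum0 : 0 ≤ ∑ k, eh k := Finset.sum_nonneg fun k _ => heh0 k
  have hfac1 : (∑ k, ν k ^ β)^(1/β) ≤ (μ ^ (β-1) * rtr (A*σ))^(1/β) :=
    Real.rpow_le_rpow hνβ0 step4 (by positivity)
  have hfac2 : (∑ k, eh k)^(1/α) ≤ (rtr (hpow X α))^(1/α) :=
    Real.rpow_le_rpow heh_sum0 f4 (by positivity)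
  have hfac1' : (μ ^ (β-1) * rtr (A*σ))^(1/β) = μ^(1/α) * (rtr (A*σ))^((α-1)/α) := by
    rw [Real.mul_rpow (Real.rpow_nonneg hμ _) hrtrAσ0, ← Real.rpow_mul hμ]
    have hx1 : (β-1) * (1/β) = 1/α := by rw [hβ_def]; field_simp; ring
    have hx2 : (1:ℝ)/β = (α-1)/α := by rw [hβ_def]; field_simp
    rw [hx1, hx2]
  calc rtr (A * ρ) ≤ (∑ k, ν k ^ β)^(1/β) * (∑ k, eh k)^(1/α) := final1
    _ ≤ (μ ^ (β-1) * rtr (A*σ))^(1/β) * (rtr (hpow X α))^(1/α) := by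
        apply mul_le_mul hfac1 hfac2 (Real.rpow_nonneg heh_sum0 _)
        positivity
    _ = (rtr (hpow X α))^(1/α) * μ^(1/α) * (rtr (A*σ))^((α-1)/α) := by
        rw [hfac1']
        ring

end ProjAux
end Master
section MainAux
variable {n : Type*} [Fintype n] [DecidableEq n]
namespace ProjAux

lemma rtr_real_smul (r : ℝ) (A : Matrix n n ℂ) : rtr ((r:ℂ) • A) = r * rtr A := by
  rw [rtr, Matrix.trace_smul]
  simp [rtr, Complex.re_ofReal_mul]

lemma UDU_sub' {U : Matrix n n ℂ} (f g : n → ℝ) :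
    U * Matrix.diagonal (fun i => ((f i : ℝ):ℂ)) * star U
      - U * Matrix.diagonal (fun i => ((g i : ℝ):ℂ)) * star U
      = U * Matrix.diagonal (fun i => ((f i - g i : ℝ):ℂ)) * star U := by
  rw [UDU_sub]
  have hfun : (fun i => ((f i : ℝ):ℂ) - ((g i : ℝ):ℂ)) = fun i => ((f i - g i : ℝ):ℂ) := by
    funext i
    push_cast
    ring
  rw [hfun]

lemma smul_UDU {U : Matrix n n ℂ} (r : ℝ) (f : n → ℝ) :
    (r:ℂ) • (U * Matrix.diagonal (fun i => ((f i : ℝ):ℂ)) * star U)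
      = U * Matrix.diagonal (fun i => ((r * f i : ℝ):ℂ)) * star U := by
  have h1 : (r:ℂ) • Matrix.diagonal (fun i => ((f i:ℝ):ℂ))
      = Matrix.diagonal (fun i => ((r * f i:ℝ):ℂ)) := by
    apply Matrix.ext
    intro i j
    rw [Matrix.smul_apply]
    by_cases hij : i = j
    · subst hij
      rw [Matrix.diagonal_apply_eq, Matrix.diagonal_apply_eq, smul_eq_mul]
      push_cast
      ring
    · rw [Matrix.diagonal_apply_ne _ hij, Matrix.diagonal_apply_ne _ hij, smul_zero]
  have h2 : U * ((r:ℂ) • Matrix.diagonal (fun i => ((f i:ℝ):ℂ))) * star U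
      = (r:ℂ) • (U * Matrix.diagonal (fun i => ((f i:ℝ):ℂ)) * star U) := by
    rw [Matrix.mul_smul, Matrix.smul_mul]
  rw [← h2, h1]

end ProjAux
end MainAux

set_option maxHeartbeats 2000000 in
theorem renyi_projector_construction'
    {n : Type*} [Fintype n] [DecidableEq n] [Nonempty n]
    (ρ σ M : Matrix n n ℂ) (hρ : ρ.PosSemidef) (hρ0 : 0 < rtr ρ) (hρ1 : rtr ρ ≤ 1)
    (hσ : σ.PosDef) (hM : M.PosSemidef) (hMσ : rtr (M * σ) ≤ 1)
    (α ε : ℝ) (hα : 1 < α) (hε : ε ∈ Set.Ioo (0 : ℝ) 1) :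
    ∃ Pr : Matrix n n ℂ, Pr.IsHermitian ∧ Pr * Pr = Pr ∧
      rtr (Pr * ρ) ≤ ε ^ 2 ∧
      rtr (M * ((1 - Pr) * ρ * (1 - Pr)))
        ≤ (2 : ℝ) ^ sandwichedRenyi α ρ σ * ε ^ (-2 / (α - 1)) := by
  classical
  obtain ⟨hε0, hε1⟩ := hε
  have hα0 : (0:ℝ) < α := lt_trans one_pos hα
  have hαne : α ≠ 0 := ne_of_gt hα0
  have hα1 : (0:ℝ) < α - 1 := by linarith
  have hα1ne : α - 1 ≠ 0 := ne_of_gt hα1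
  -- X PSD and C := rtr (hpow X α) > 0
  have hσH : σ.IsHermitian := hσ.1
  have hsc_herm : star (hpow σ ((1-α)/(2*α))) = hpow σ ((1-α)/(2*α)) := by
    rw [ProjAux.hpow_unfold hσH ((1-α)/(2*α)), Matrix.star_eq_conjTranspose,
      (ProjAux.UDU_isHermitian (fun i => hσH.eigenvalues i ^ ((1-α)/(2*α)))).eq]
  set X : Matrix n n ℂ := hpow σ ((1-α)/(2*α)) * ρ * hpow σ ((1-α)/(2*α)) with hX_def
  have hXpsd : X.PosSemidef := by
    have h2 := hρ.mul_mul_conjTranspose_same (hpow σ ((1-α)/(2*α)))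
    rw [← Matrix.star_eq_conjTranspose, hsc_herm] at h2
    exact h2
  have hXH : X.IsHermitian := hXpsd.1
  set t : ℝ := rtr ρ with ht_def
  set C : ℝ := rtr (hpow X α) with hC_def
  -- positivity of C
  have htrX : 0 < rtr X := by
    -- X = sc * ρ * sc ; trace X = trace ((sc*sc) * ρ) ≥ δ * trace ρ
    set sc : Matrix n n ℂ := hpow σ ((1-α)/(2*α)) with hsc_def
    obtain ⟨U, s, hs, hU1, hU2, hscdec⟩ :
        ∃ (U : Matrix n n ℂ) (s : n → ℝ), (∀ i, 0 < s i) ∧ star U * U = 1 ∧ U * star U = 1 ∧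
          sc * sc = U * Matrix.diagonal (fun i => ((s i ^ ((1-α)/(2*α)) * s i ^ ((1-α)/(2*α)) : ℝ) : ℂ)) * star U := by
      refine ⟨_, _, (fun i => hσ.eigenvalues_pos i),
        Unitary.star_mul_self_of_mem hσH.eigenvectorUnitary.2,
        Unitary.mul_star_self_of_mem hσH.eigenvectorUnitary.2, ?_⟩
      rw [hsc_def, ProjAux.hpow_unfold hσH, ProjAux.UDU_mul
        (Unitary.star_mul_self_of_mem hσH.eigenvectorUnitary.2)]
      have hfun : (fun i => ((hσH.eigenvalues i ^ ((1-α)/(2*α)) : ℝ):ℂ)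
            * ((hσH.eigenvalues i ^ ((1-α)/(2*α)) : ℝ):ℂ))
          = fun i => ((hσH.eigenvalues i ^ ((1-α)/(2*α)) * hσH.eigenvalues i ^ ((1-α)/(2*α)) : ℝ):ℂ) := by
        funext i
        push_cast
        ring
      rw [hfun]
    set w : n → ℝ := fun i => s i ^ ((1-α)/(2*α)) * s i ^ ((1-α)/(2*α)) with hw_def
    have hw : ∀ i, 0 < w i := fun i =>
      mul_pos (Real.rpow_pos_of_pos (hs i) _) (Real.rpow_pos_of_pos (hs i) _)
    set δ : ℝ := Finset.univ.inf' Finset.univ_nonempty w with hδ_def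
    have hδ0 : 0 < δ := by
      rw [hδ_def, Finset.lt_inf'_iff]
      exact fun i _ => hw i
    have hδw : ∀ i, δ ≤ w i := fun i => Finset.inf'_le _ (Finset.mem_univ i)
    have htr1 : rtr X = rtr ((sc * sc) * ρ) := by
      rw [hX_def, rtr, rtr, Matrix.trace_mul_cycle sc ρ sc]
    have hpsd1 : ((sc * sc) - (δ:ℂ) • 1).PosSemidef := by
      have h1 : (δ:ℂ) • (1 : Matrix n n ℂ)
          = U * Matrix.diagonal (fun i => ((δ * 1 : ℝ):ℂ)) * star U := by
        rw [← ProjAux.smul_UDU δ (fun _ => (1:ℝ)), ← ProjAux.one_eq_UDU hU2]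
      rw [hscdec, h1, ProjAux.UDU_sub']
      exact ProjAux.UDU_posSemidef _ (fun i => by
        have := hδw i
        rw [hw_def] at this
        simp only [mul_one]
        linarith)
    have hge : 0 ≤ rtr ((sc * sc) * ρ) - δ * rtr ρ := by
      have h2 := rtr_mul_nonneg hpsd1 hρ
      have h3 : ((sc * sc) - (δ:ℂ) • 1) * ρ = (sc*sc) * ρ - (δ:ℂ) • ρ := by
        rw [Matrix.sub_mul, Matrix.smul_mul, one_mul]
      rw [h3, ProjAux.rtr_sub, ProjAux.rtr_real_smul] at h2
      linarith
    have : 0 < δ * rtr ρ := mul_pos hδ0 hρ0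
    rw [htr1]
    linarith
  obtain ⟨V, lam, hlam, hV1, hV2, hXdec, hXαdec⟩ :
      ∃ (V : Matrix n n ℂ) (lam : n → ℝ), (∀ i, 0 ≤ lam i) ∧ star V * V = 1 ∧ V * star V = 1 ∧
        X = V * Matrix.diagonal (fun i => ((lam i : ℝ) : ℂ)) * star V ∧
        hpow X α = V * Matrix.diagonal (fun i => ((lam i ^ α : ℝ) : ℂ)) * star V :=
    ⟨_, _, (fun i => hXpsd.eigenvalues_nonneg i),
      Unitary.star_mul_self_of_mem hXH.eigenvectorUnitary.2,
      Unitary.mul_star_self_of_mem hXH.eigenvectorUnitary.2,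
      ProjAux.spectral' hXH, ProjAux.hpow_unfold hXH α⟩
  have hC : 0 < C := by
    have h1 : rtr X = ∑ i, lam i := by rw [hXdec, ProjAux.rtr_UDU hV1]
    have h2 : C = ∑ i, lam i ^ α := by rw [hC_def, hXαdec, ProjAux.rtr_UDU hV1]
    have h3 : ∃ i, 0 < lam i := by
      by_contra hcon
      push_neg at hcon
      have : rtr X ≤ 0 := by
        rw [h1]
        exact Finset.sum_nonpos fun i _ => hcon i
      linarith
    obtain ⟨i0, hi0⟩ := h3
    rw [h2]
    calc (0:ℝ) < lam i0 ^ α := Real.rpow_pos_of_pos hi0 α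
      _ ≤ ∑ i, lam i ^ α := Finset.single_le_sum
          (fun i _ => Real.rpow_nonneg (hlam i) α) (Finset.mem_univ i0)
  -- numerology
  have ht0 : 0 < t := hρ0
  have ht1 : t ≤ 1 := hρ1
  have hCt : 0 < C / t := div_pos hC ht0
  set R : ℝ := (C/t) ^ ((1:ℝ)/(α-1)) with hR_def
  have hR : 0 < R := Real.rpow_pos_of_pos hCt _
  have hCsplit : C ^ ((1:ℝ)/α) = (C/t) ^ ((1:ℝ)/α) * t ^ ((1:ℝ)/α) := by
    rw [← Real.mul_rpow hCt.le ht0.le, div_mul_cancel₀ _ (ne_of_gt ht0)]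
  have ht_le : t ^ ((1:ℝ)/α) ≤ 1 := Real.rpow_le_one ht0.le ht1 (by positivity)
  set μ : ℝ := R * ε ^ (-(2*α)/(α-1)) with hμ_def
  have hμpos : 0 < μ := mul_pos hR (Real.rpow_pos_of_pos hε0 _)
  have hQ : (2:ℝ) ^ sandwichedRenyi α ρ σ = R := by
    rw [sandwichedRenyi, hR_def]
    rw [← hX_def, ← hC_def, ← ht_def]
    rw [mul_comm (1/(α-1)) (Real.logb 2 (C/t)), Real.rpow_mul (by norm_num : (0:ℝ) ≤ 2)]
    rw [Real.rpow_logb (by norm_num) (by norm_num) hCt]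
  -- spectral data of M
  have hMH : M.IsHermitian := hM.1
  obtain ⟨Um, m, hm, hUm1, hUm2, hMdec⟩ :
      ∃ (Um : Matrix n n ℂ) (m : n → ℝ), (∀ j, 0 ≤ m j) ∧ star Um * Um = 1 ∧ Um * star Um = 1 ∧
        M = Um * Matrix.diagonal (fun j => ((m j : ℝ) : ℂ)) * star Um :=
    ⟨_, _, (fun j => hM.eigenvalues_nonneg j),
      Unitary.star_mul_self_of_mem hMH.eigenvectorUnitary.2,
      Unitary.mul_star_self_of_mem hMH.eigenvectorUnitary.2, ProjAux.spectral' hMH⟩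
  set ind : n → ℝ := fun j => if μ < m j then (1:ℝ) else 0 with hind_def
  set Pr : Matrix n n ℂ := Um * Matrix.diagonal (fun j => ((ind j : ℝ):ℂ)) * star Um
    with hPr_def
  have hPr_herm : Pr.IsHermitian := ProjAux.UDU_isHermitian ind
  have hPr_idem : Pr * Pr = Pr := by
    rw [hPr_def, ProjAux.UDU_mul hUm1]
    have hfun : (fun j => ((ind j : ℝ):ℂ) * ((ind j : ℝ):ℂ)) = fun j => ((ind j : ℝ):ℂ) := by
      funext j
      rw [← Complex.ofReal_mul]
      congr 1
      rw [hind_def]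
      dsimp only
      split_ifs <;> ring
    rw [hfun]
  have hPr_psd : Pr.PosSemidef := ProjAux.UDU_posSemidef _ (fun j => by
    rw [hind_def]; dsimp only; split_ifs <;> norm_num)
  -- Markov: q := rtr (Pr * σ) ≤ 1/μ
  set q : ℝ := rtr (Pr * σ) with hq_def
  have hq0 : 0 ≤ q := rtr_mul_nonneg hPr_psd hσ.posSemidef
  have hMσ0 : 0 ≤ rtr (M * σ) := rtr_mul_nonneg hM hσ.posSemidef
  have hMarkov : μ * q ≤ rtr (M * σ) := by
    have h1 : (M - (μ:ℂ) • Pr).PosSemidef := by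
      rw [hMdec, hPr_def, ProjAux.smul_UDU, ProjAux.UDU_sub']
      exact ProjAux.UDU_posSemidef _ (fun j => by
        rw [hind_def]; dsimp only; split_ifs with h
        · simp only [mul_one]; linarith
        · simp only [mul_zero, sub_zero]; exact hm j)
    have h2 := rtr_mul_nonneg h1 hσ.posSemidef
    have h3 : (M - (μ:ℂ) • Pr) * σ = M * σ - (μ:ℂ) • (Pr * σ) := by
      rw [Matrix.sub_mul, Matrix.smul_mul]
    rw [h3, ProjAux.rtr_sub, ProjAux.rtr_real_smul] at h2
    rw [hq_def]
    linarith
  have hqμ : q ≤ 1/μ := by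
    rw [le_div_iff₀ hμpos]
    calc q * μ = μ * q := mul_comm _ _
      _ ≤ rtr (M * σ) := hMarkov
      _ ≤ 1 := hMσ
  -- goal (1)
  have hgoal1 : rtr (Pr * ρ) ≤ ε ^ 2 := by
    have hm1 := ProjAux.master ρ σ Pr hρ hσ hPr_psd 1 α zero_le_one hα (by
      rw [Complex.ofReal_one, one_smul]
      have h1 : (1:Matrix n n ℂ) - Pr
          = Um * Matrix.diagonal (fun j => ((1 - ind j : ℝ):ℂ)) * star Um := by
        rw [ProjAux.one_eq_UDU hUm2, hPr_def, ProjAux.UDU_sub']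
      rw [h1]
      exact ProjAux.UDU_posSemidef _ (fun j => by
        rw [hind_def]; dsimp only; split_ifs <;> norm_num))
    rw [← hX_def, ← hC_def, Real.one_rpow, mul_one, ← hq_def] at hm1
    have hq2 : q ^ ((α-1)/α) ≤ (1/μ) ^ ((α-1)/α) :=
      Real.rpow_le_rpow hq0 hqμ (by positivity)
    have hstep : rtr (Pr * ρ) ≤ C ^ ((1:ℝ)/α) * (1/μ) ^ ((α-1)/α) := by
      calc rtr (Pr * ρ) ≤ C ^ ((1:ℝ)/α) * q ^ ((α-1)/α) := hm1
        _ ≤ _ := by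
            apply mul_le_mul_of_nonneg_left hq2
            positivity
    -- numerics: C^(1/α) * (1/μ)^((α-1)/α) = t^(1/α) * ε^2
    have hμpow : μ ^ ((α-1)/α) = (C/t) ^ ((1:ℝ)/α) * ε ^ (-2:ℝ) := by
      rw [hμ_def, Real.mul_rpow hR.le (Real.rpow_nonneg hε0.le _), hR_def,
        ← Real.rpow_mul hCt.le, ← Real.rpow_mul hε0.le]
      congr 2
      · field_simp
      · field_simp
    have hnum : C ^ ((1:ℝ)/α) * (1/μ) ^ ((α-1)/α) = t ^ ((1:ℝ)/α) * ε ^ (2:ℝ) := by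
      have hinv : (1/μ) ^ ((α-1)/α) = (μ ^ ((α-1)/α))⁻¹ := by
        rw [one_div, Real.inv_rpow hμpos.le]
      rw [hinv, hμpow, hCsplit]
      rw [mul_inv, ← Real.rpow_neg hε0.le, neg_neg]
      have hCt1 : ((C/t) ^ ((1:ℝ)/α))⁻¹ * (C/t) ^ ((1:ℝ)/α) = 1 :=
        inv_mul_cancel₀ (ne_of_gt (Real.rpow_pos_of_pos hCt _))
      calc (C/t) ^ ((1:ℝ)/α) * t ^ ((1:ℝ)/α) * (((C/t) ^ ((1:ℝ)/α))⁻¹ * ε ^ (2:ℝ))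
          = (((C/t) ^ ((1:ℝ)/α))⁻¹ * (C/t) ^ ((1:ℝ)/α)) * (t ^ ((1:ℝ)/α) * ε ^ (2:ℝ)) := by
            ring
        _ = t ^ ((1:ℝ)/α) * ε ^ (2:ℝ) := by rw [hCt1, one_mul]
    have hε2 : ε ^ (2:ℝ) = ε ^ 2 := by
      rw [show ((2:ℝ)) = ((2:ℕ):ℝ) from by norm_num, Real.rpow_natCast]
    calc rtr (Pr * ρ) ≤ C ^ ((1:ℝ)/α) * (1/μ) ^ ((α-1)/α) := hstep
      _ = t ^ ((1:ℝ)/α) * ε ^ (2:ℝ) := hnum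
      _ ≤ 1 * ε ^ (2:ℝ) := by
          apply mul_le_mul_of_nonneg_right ht_le
          positivity
      _ = ε ^ 2 := by rw [one_mul, hε2]
  -- goal (2)
  have hgoal2 : rtr (M * ((1 - Pr) * ρ * (1 - Pr)))
      ≤ (2 : ℝ) ^ sandwichedRenyi α ρ σ * ε ^ (-2 / (α - 1)) := by
    have hPdec : (1:Matrix n n ℂ) - Pr
        = Um * Matrix.diagonal (fun j => ((1 - ind j : ℝ):ℂ)) * star Um := by
      rw [ProjAux.one_eq_UDU hUm2, hPr_def, ProjAux.UDU_sub']
    set A2 : Matrix n n ℂ :=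
      Um * Matrix.diagonal (fun j => ((m j * (1 - ind j) : ℝ):ℂ)) * star Um with hA2_def
    have hPMP : (1 - Pr) * M * (1 - Pr) = A2 := by
      rw [hPdec, hMdec, ProjAux.UDU_mul hUm1, ProjAux.UDU_mul hUm1, hA2_def]
      have hfun : (fun j => ((1 - ind j : ℝ):ℂ) * ((m j : ℝ):ℂ) * ((1 - ind j : ℝ):ℂ))
          = fun j => ((m j * (1 - ind j) : ℝ):ℂ) := by
        funext j
        rw [hind_def]
        dsimp only
        split_ifs <;> push_cast <;> ring
      rw [hfun]
    have htr : rtr (M * ((1 - Pr) * ρ * (1 - Pr))) = rtr (A2 * ρ) := by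
      have a1 : M * ((1-Pr)*ρ*(1-Pr)) = (M*(1-Pr)*ρ)*(1-Pr) := by noncomm_ring
      have a2 : (1-Pr)*(M*(1-Pr)*ρ) = ((1-Pr)*M*(1-Pr))*ρ := by noncomm_ring
      rw [rtr, a1, Matrix.trace_mul_comm, a2, hPMP]
      rfl
    have hA2psd : A2.PosSemidef := ProjAux.UDU_posSemidef _ (fun j => by
      rw [hind_def]; dsimp only; split_ifs
      · norm_num
      · simpa using hm j)
    have hA2μ : ((μ:ℂ) • (1:Matrix n n ℂ) - A2).PosSemidef := by
      have h1 : (μ:ℂ) • (1:Matrix n n ℂ)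
          = Um * Matrix.diagonal (fun j => ((μ * 1 : ℝ):ℂ)) * star Um := by
        rw [← ProjAux.smul_UDU μ (fun _ => (1:ℝ)), ← ProjAux.one_eq_UDU hUm2]
      rw [h1, hA2_def, ProjAux.UDU_sub']
      exact ProjAux.UDU_posSemidef _ (fun j => by
        rw [hind_def]; dsimp only; split_ifs with h
        · nlinarith [hμpos.le, hm j]
        · have hle := not_lt.mp h
          nlinarith [hm j])
    have hA2σle : rtr (A2 * σ) ≤ 1 := by
      have h1 : (M - A2).PosSemidef := by
        rw [hMdec, hA2_def, ProjAux.UDU_sub']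
        exact ProjAux.UDU_posSemidef _ (fun j => by
          rw [hind_def]; dsimp only; split_ifs
          · nlinarith [hm j]
          · nlinarith [hm j])
      have h2 := rtr_mul_nonneg h1 hσ.posSemidef
      have h3 : (M - A2) * σ = M * σ - A2 * σ := Matrix.sub_mul _ _ _
      rw [h3, ProjAux.rtr_sub] at h2
      linarith
    have hA2σ0 : 0 ≤ rtr (A2 * σ) := rtr_mul_nonneg hA2psd hσ.posSemidef
    have hm2 := ProjAux.master ρ σ A2 hρ hσ hA2psd μ α hμpos.le hα hA2μ
    rw [← hX_def, ← hC_def] at hm2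
    have hA2σpow : (rtr (A2*σ)) ^ ((α-1)/α) ≤ 1 :=
      Real.rpow_le_one hA2σ0 hA2σle (by positivity)
    have hμ1α : μ ^ ((1:ℝ)/α) = R ^ ((1:ℝ)/α) * ε ^ (-2/(α-1)) := by
      rw [hμ_def, Real.mul_rpow hR.le (Real.rpow_nonneg hε0.le _), ← Real.rpow_mul hε0.le]
      congr 2
      field_simp
    have hRsplit : (C/t) ^ ((1:ℝ)/α) * R ^ ((1:ℝ)/α) = R := by
      rw [hR_def, ← Real.rpow_mul hCt.le, ← Real.rpow_add hCt]
      congr 1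
      field_simp
      ring
    have hNC2 : C ^ ((1:ℝ)/α) * μ ^ ((1:ℝ)/α) = R * ε ^ (-2/(α-1)) * t ^ ((1:ℝ)/α) := by
      rw [hCsplit, hμ1α]
      calc (C/t) ^ ((1:ℝ)/α) * t ^ ((1:ℝ)/α) * (R ^ ((1:ℝ)/α) * ε ^ (-2/(α-1)))
          = ((C/t) ^ ((1:ℝ)/α) * R ^ ((1:ℝ)/α)) * ε ^ (-2/(α-1)) * t ^ ((1:ℝ)/α) := by
            ring
        _ = R * ε ^ (-2/(α-1)) * t ^ ((1:ℝ)/α) := by rw [hRsplit]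
    calc rtr (M * ((1 - Pr) * ρ * (1 - Pr))) = rtr (A2 * ρ) := htr
      _ ≤ C ^ ((1:ℝ)/α) * μ ^ ((1:ℝ)/α) * (rtr (A2*σ)) ^ ((α-1)/α) := hm2
      _ ≤ C ^ ((1:ℝ)/α) * μ ^ ((1:ℝ)/α) * 1 := by
          apply mul_le_mul_of_nonneg_left hA2σpow
          positivity
      _ = R * ε ^ (-2/(α-1)) * t ^ ((1:ℝ)/α) := by rw [mul_one, hNC2]
      _ ≤ R * ε ^ (-2/(α-1)) * 1 := by
          apply mul_le_mul_of_nonneg_left ht_le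
          positivity
      _ = (2 : ℝ) ^ sandwichedRenyi α ρ σ * ε ^ (-2 / (α - 1)) := by
          rw [mul_one, hQ]
  exact ⟨Pr, hPr_herm, hPr_idem, hgoal1, hgoal2⟩

/-- The key projector construction in the proof of the smooth
max-divergence vs Rényi divergence bound. -/
theorem renyi_projector_construction
    {n : Type*} [Fintype n] [DecidableEq n] [Nonempty n]
    (ρ σ M : Matrix n n ℂ) (hρ : ρ.PosSemidef) (hρ0 : 0 < rtr ρ) (hρ1 : rtr ρ ≤ 1)
    (hσ : σ.PosDef) (hM : M.PosSemidef) (hMσ : rtr (M * σ) ≤ 1)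
    (α ε : ℝ) (hα : 1 < α) (hε : ε ∈ Set.Ioo (0 : ℝ) 1) :
    ∃ Pr : Matrix n n ℂ, Pr.IsHermitian ∧ Pr * Pr = Pr ∧
      rtr (Pr * ρ) ≤ ε ^ 2 ∧
      rtr (M * ((1 - Pr) * ρ * (1 - Pr)))
        ≤ (2 : ℝ) ^ sandwichedRenyi α ρ σ * ε ^ (-2 / (α - 1)) := by
  exact renyi_projector_construction' ρ σ M hρ hρ0 hρ1 hσ hM hMσ α ε hα hε
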